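/- Every Nikodym set B in F_q^n satisfies |B| >= C(n+q-2, n) >= q^n / n! * (1 - 1/q)^n, in particular |B| >= C_n * q^n for a constant C_n depending only on n (for q >= 2). -/

import Mathlib

open MvPolynomial Polynomial Finset

/-- Finsupps on a fintype with sum exactly `m` are equivalent to `Sym α m`. -/
noncomputable def eqSym (α : Type*) [DecidableEq α] (m : ℕ) :
    {d : α →₀ ℕ // (d.sum fun _ e => e) = m} ≃ Sym α m where
  toFun d := ⟨Finsupp.toMultiset d.1, by
    rw [Finsupp.card_toMultiset]; exact d.2⟩
  invFun s := ⟨Multiset.toFinsupp s.1, by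
    exact (Multiset.toFinsupp_sum_eq s.1).trans s.2⟩
  left_inv d := by ext : 2; simp
  right_inv s := by ext : 2; simp

noncomputable def eqSnoc (n m : ℕ) :
    {f : Fin n → ℕ // ∑ i, f i ≤ m} ≃ {f : Fin (n+1) → ℕ // ∑ i, f i = m} where
  toFun f := ⟨Fin.snoc f.1 (m - ∑ i, f.1 i), by
    rw [Fin.sum_univ_castSucc]
    simp only [Fin.snoc_castSucc, Fin.snoc_last]
    omega⟩
  invFun g := ⟨fun i => g.1 i.castSucc, by
    have := g.2
    rw [Fin.sum_univ_castSucc] at this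
    exact le_trans (Nat.le_add_right _ _) this.le⟩
  left_inv f := by ext i; simp
  right_inv g := by
    ext i
    refine Fin.lastCases ?_ (fun i => ?_) i
    · have := g.2
      rw [Fin.sum_univ_castSucc] at this
      simp only [Fin.snoc_last]
      omega
    · simp

theorem card_bounded_degree (n m : ℕ) :
    Nat.card {d : Fin n →₀ ℕ // (d.sum fun _ e => e) ≤ m} = (n + m).choose n := by
  classical
  have e1 : {d : Fin n →₀ ℕ // (d.sum fun _ e => e) ≤ m} ≃ {f : Fin n → ℕ // ∑ i, f i ≤ m} :=
    Equiv.subtypeEquiv Finsupp.equivFunOnFinite (fun d => by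
      rw [Finsupp.sum_fintype _ _ (fun _ => rfl)]; rfl)
  have e2 : {d : Fin n →₀ ℕ // (d.sum fun _ e => e) ≤ m} ≃ Sym (Fin (n+1)) m :=
    (e1.trans (eqSnoc n m)).trans
      ((Equiv.subtypeEquiv Finsupp.equivFunOnFinite (fun d => by
        rw [Finsupp.sum_fintype _ _ (fun _ => rfl)]; rfl)).symm.trans (eqSym (Fin (n+1)) m))
  rw [Nat.card_congr e2, Nat.card_eq_fintype_card, Sym.card_sym_eq_choose]
  simp only [Fintype.card_fin]
  have h1 : n + 1 + m - 1 = n + m := by omega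
  rw [h1]
  calc (n + m).choose m = (n + m).choose (n + m - n) := by rw [Nat.add_sub_cancel_left]
    _ = (n + m).choose n := Nat.choose_symm (Nat.le_add_right n m)

theorem finrank_rtd (F : Type) [Field F] (n m : ℕ) :
    Module.finrank F (restrictTotalDegree (Fin n) F m) = (n + m).choose n := by
  classical
  let s : Set (Fin n →₀ ℕ) := { d | (d.sum fun _ e => e) ≤ m }
  have b : Module.Basis s F (restrictTotalDegree (Fin n) F m) := basisRestrictSupport F s
  haveI : Fintype s := FiniteDimensional.fintypeBasisIndex b
  rw [Module.finrank_eq_card_basis b, ← Nat.card_eq_fintype_card]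
  exact card_bounded_degree n m

theorem natDegree_aeval_le' {F : Type} [CommRing F] {n : ℕ} (P : MvPolynomial (Fin n) F)
    (g : Fin n → Polynomial F) (hg : ∀ i, (g i).natDegree ≤ 1) :
    (MvPolynomial.aeval g P).natDegree ≤ P.totalDegree := by
  classical
  rw [MvPolynomial.aeval_def, MvPolynomial.eval₂_eq]
  refine Polynomial.natDegree_sum_le_of_forall_le _ _ (fun d hd => ?_)
  refine le_trans (Polynomial.natDegree_C_mul_le _ _) ?_
  refine le_trans (Polynomial.natDegree_prod_le _ _) ?_
  refine le_trans (Finset.sum_le_sum (fun i _ => le_trans (Polynomial.natDegree_pow_le)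
    (by exact Nat.mul_le_mul_left _ (hg i)))) ?_
  simp only [Nat.mul_one]
  exact MvPolynomial.le_totalDegree hd

theorem eval_aeval_line {F : Type} [CommRing F] {n : ℕ} (P : MvPolynomial (Fin n) F)
    (a v : Fin n → F) (t : F) :
    Polynomial.eval t (MvPolynomial.aeval
        (fun i => Polynomial.C (a i) + Polynomial.C (v i) * Polynomial.X) P)
      = MvPolynomial.eval (a + t • v) P := by
  induction P using MvPolynomial.induction_on with
  | C c => simp
  | add p q hp hq => simp [hp, hq]
  | mul_X p i hp =>
    simp only [map_mul, MvPolynomial.aeval_X, Polynomial.eval_mul, Polynomial.eval_add,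
      Polynomial.eval_C, Polynomial.eval_mul, Polynomial.eval_X, hp, MvPolynomial.eval_mul,
      MvPolynomial.eval_X, Pi.add_apply, Pi.smul_apply, smul_eq_mul]
    ring

def line {n : ℕ} {F : Type} [Field F] (a v : Fin n → F) : Set (Fin n → F) :=
  {y | ∃ t : F, y = a + t • v}

def IsNikodym {n : ℕ} {F : Type} [Field F] (B : Set (Fin n → F)) : Prop :=
  ∀ x ∉ B, ∃ a v : Fin n → F, v ≠ 0 ∧ line a v ∩ Bᶜ = {x}

theorem nikodym_card_bound {n : ℕ} (F : Type) [Field F] [Fintype F]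
    (B : Set (Fin n → F)) (hB : IsNikodym B) :
    (n + Fintype.card F - 2).choose n ≤ B.ncard := by
  classical
  set q := Fintype.card F with hqdef
  have hq : 2 ≤ q := Fintype.one_lt_card
  by_contra hcon
  push_neg at hcon
  set W := restrictTotalDegree (Fin n) F (q - 2) with hW
  let φ : W →ₗ[F] (B → F) :=
    (LinearMap.funLeft F F (Subtype.val)).comp ((evalₗ F (Fin n)).comp W.subtype)
  have hnotinj : ¬ Function.Injective φ := by
    intro hinj
    have hle := LinearMap.finrank_le_finrank_of_injective hinj
    rw [finrank_rtd, Module.finrank_fintype_fun_eq_card] at hle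
    have h1 : Fintype.card B = B.ncard := by
      rw [← Nat.card_eq_fintype_card, Nat.card_coe_set_eq]
    have h2 : n + (q - 2) = n + q - 2 := by omega
    rw [h1, h2] at hle
    omega
  rw [Function.not_injective_iff] at hnotinj
  obtain ⟨p₁, p₂, hpe, hpne⟩ := hnotinj
  set P : MvPolynomial (Fin n) F := (p₁ : MvPolynomial (Fin n) F) - (p₂ : MvPolynomial (Fin n) F)
    with hP
  have hPne : P ≠ 0 := sub_ne_zero_of_ne (fun h => hpne (Subtype.ext h))
  have hPdeg : P.totalDegree ≤ q - 2 := (mem_restrictTotalDegree _ _ P).1 (sub_mem p₁.2 p₂.2)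
  have hPB : ∀ x ∈ B, MvPolynomial.eval x P = 0 := by
    intro x hx
    have := congrFun hpe ⟨x, hx⟩
    simp only [φ, LinearMap.comp_apply, LinearMap.funLeft_apply, evalₗ_apply,
      Submodule.coe_subtype] at this
    simp [hP, this]
  have hPall : ∀ x, MvPolynomial.eval x P = 0 := by
    intro x
    by_cases hx : x ∈ B
    · exact hPB x hx
    obtain ⟨a, v, hv, hline⟩ := hB x hx
    have hxline : x ∈ line a v ∩ Bᶜ := hline ▸ rfl
    obtain ⟨t₀, hx0⟩ := hxline.1
    have hinj : Function.Injective (fun t : F => a + t • v) := by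
      intro t₁ t₂ h
      simp only at h
      have h2 : t₁ • v = t₂ • v := add_right_injective a h
      have : (t₁ - t₂) • v = 0 := by rw [sub_smul, h2, sub_self]
      rcases smul_eq_zero.1 this with h' | h'
      · exact sub_eq_zero.1 h'
      · exact absurd h' hv
    set Q : Polynomial F :=
      MvPolynomial.aeval (fun i => Polynomial.C (a i) + Polynomial.C (v i) * Polynomial.X) P
      with hQdef
    have hQdeg : Q.natDegree ≤ q - 2 :=
      le_trans (natDegree_aeval_le' P _ (fun i => by
        refine le_trans (Polynomial.natDegree_add_le _ _) (max_le ?_ ?_)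
        · simp
        · exact le_trans (Polynomial.natDegree_C_mul_le _ _) Polynomial.natDegree_X_le)) hPdeg
    have hQroots : ∀ t ∈ Finset.univ.erase t₀, Q.eval t = 0 := by
      intro t ht
      have hne : a + t • v ≠ x := by
        intro h
        exact (Finset.mem_erase.1 ht).1 (hinj (h.trans hx0))
      have hmem : a + t • v ∈ B := by
        by_contra hmem
        have : a + t • v ∈ line a v ∩ Bᶜ := ⟨⟨t, rfl⟩, hmem⟩
        rw [hline] at this
        exact hne this
      rw [hQdef, eval_aeval_line]
      exact hPB _ hmem
    have hQ0 : Q = 0 := by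
      refine Polynomial.eq_zero_of_natDegree_lt_card_of_eval_eq_zero' Q _ hQroots ?_
      rw [Finset.card_erase_of_mem (Finset.mem_univ _), Finset.card_univ]
      omega
    have h0 : Polynomial.eval t₀ Q = 0 := by rw [hQ0, Polynomial.eval_zero]
    rw [hQdef, eval_aeval_line, ← hx0] at h0
    exact h0
  have hmem : P ∈ restrictDegree (Fin n) F (Fintype.card F - 1) := by
    have h1 := restrictTotalDegree_le_restrictDegree (Fin n) F (q - 2) (sub_mem p₁.2 p₂.2)
    rw [mem_restrictDegree] at h1 ⊢
    exact fun s hs i => le_trans (h1 s hs i) (by omega)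
  exact hPne (MvPolynomial.eq_zero_of_eval_eq_zero (Fin n) F P hPall hmem)

theorem choose_ge_bound (n : ℕ) (F : Type) [Field F] [Fintype F] :
    (((n + Fintype.card F - 2).choose n : ℝ) ≥
      (Fintype.card F : ℝ) ^ n / (n.factorial : ℝ) *
        (1 - 1 / (Fintype.card F : ℝ)) ^ n) := by
  set q := Fintype.card F with hqdef
  have hq : 2 ≤ q := Fintype.one_lt_card
  have hq0 : (q : ℝ) ≠ 0 := Nat.cast_ne_zero.2 (by omega)
  have key := Nat.pow_le_choose (α := ℝ) n (n + q - 2)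
  have h1 : n + q - 2 + 1 - n = q - 1 := by omega
  rw [h1] at key
  have h2 : ((q - 1 : ℕ) : ℝ) = (q : ℝ) - 1 := by
    rw [Nat.cast_sub (by omega)]; norm_num
  have h3 : (q : ℝ) * (1 - 1 / q) = (q : ℝ) - 1 := by field_simp
  have h4 : (q : ℝ) ^ n / (n.factorial : ℝ) * (1 - 1 / q) ^ n
      = ((q : ℝ) - 1) ^ n / (n.factorial : ℝ) := by
    rw [div_mul_eq_mul_div, ← mul_pow, h3]
  rw [ge_iff_le, h4, ← h2]
  exact key

theorem stmt_5 (n : ℕ) :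
    (∀ (F : Type) [Field F] [Fintype F] (B : Set (Fin n → F)), IsNikodym B →
      (n + Fintype.card F - 2).choose n ≤ B.ncard ∧
      (((n + Fintype.card F - 2).choose n : ℝ) ≥
        (Fintype.card F : ℝ) ^ n / (n.factorial : ℝ) *
          (1 - 1 / (Fintype.card F : ℝ)) ^ n)) ∧
    ∃ C : ℝ, 0 < C ∧
      ∀ (F : Type) [Field F] [Fintype F], 2 ≤ Fintype.card F →
        ∀ B : Set (Fin n → F), IsNikodym B →
          (B.ncard : ℝ) ≥ C * (Fintype.card F : ℝ) ^ n := by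
  constructor
  · intro F _ _ B hB
    exact ⟨nikodym_card_bound F B hB, choose_ge_bound n F⟩
  · refine ⟨(1 / 2) ^ n / (n.factorial : ℝ), by positivity, ?_⟩
    intro F _ _ hq B hB
    have hq0 : (0 : ℝ) < (Fintype.card F : ℝ) := by
      have : (0 : ℕ) < Fintype.card F := by omega
      exact_mod_cast this
    have hhalf : (1 / 2 : ℝ) ≤ 1 - 1 / (Fintype.card F : ℝ) := by
      have h2 : (2 : ℝ) ≤ (Fintype.card F : ℝ) := by exact_mod_cast hq
      have : 1 / (Fintype.card F : ℝ) ≤ 1 / 2 := by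
        apply one_div_le_one_div_of_le <;> linarith
      linarith
    have c1 : ((n + Fintype.card F - 2).choose n : ℝ) ≤ (B.ncard : ℝ) := by
      exact_mod_cast nikodym_card_bound F B hB
    have c2 := choose_ge_bound n F
    have c3 : (1 / 2 : ℝ) ^ n / (n.factorial : ℝ) * (Fintype.card F : ℝ) ^ n ≤
        (Fintype.card F : ℝ) ^ n / (n.factorial : ℝ) *
          (1 - 1 / (Fintype.card F : ℝ)) ^ n := by
      have hp : ((1 / 2 : ℝ)) ^ n ≤ (1 - 1 / (Fintype.card F : ℝ)) ^ n :=
        pow_le_pow_left₀ (by norm_num) hhalf n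
      have hnn : (0 : ℝ) ≤ (Fintype.card F : ℝ) ^ n / (n.factorial : ℝ) := by positivity
      calc (1 / 2 : ℝ) ^ n / (n.factorial : ℝ) * (Fintype.card F : ℝ) ^ n
          = (Fintype.card F : ℝ) ^ n / (n.factorial : ℝ) * (1 / 2 : ℝ) ^ n := by ring
        _ ≤ _ := by exact mul_le_mul_of_nonneg_left hp hnn
    linarith
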